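/- Let (e,h,f) be an sl₂-triple in Matrix (Fin n) (Fin n) ℂ, let W := {B : Matrix (Fin n) (Fin n) ℂ | h*B - B*h = -B} be the (−1)-eigenspace of ad h, and define σ(B,B') := Matrix.trace ((e*B + B*e) * B'). Then: (a) σ(B,B') = σ(B',B) for all B, B' : Matrix (Fin n) (Fin n) ℂ (σ is symmetric); (b) if B ∈ W and σ(B,B') = 0 for all B' ∈ W, then B = 0 (σ is non-degenerate on W). -/

import Mathlib

open Polynomial

namespace Stmt12Aux

variable {V : Type*} [AddCommGroup V] [Module ℂ V]

/-- A ℕ-indexed family of eigenvectors with distinct eigenvalues must contain `0`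
in a finite-dimensional space. -/
lemma exists_eq_zero_of_eigen [FiniteDimensional ℂ V] (H : Module.End ℂ V)
    (v : ℕ → V) (μ : ℕ → ℂ) (hμ : Function.Injective μ)
    (hv : ∀ k, H (v k) = μ k • v k) : ∃ k, v k = 0 := by
  by_contra hc
  push_neg at hc
  have li : LinearIndependent ℂ v :=
    Module.End.eigenvectors_linearIndependent' H μ hμ v
      (fun k => ⟨Module.End.mem_genEigenspace_one.mpr (hv k), hc k⟩)
  have hfin : (Set.range v).Finite := LinearIndependent.set_finite_of_isNoetherian
    ((linearIndepOn_id_range_iff li.injective).mpr li)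
  exact (Set.infinite_range_of_injective li.injective) hfin

lemma pow_eigen {T : Module.End ℂ V} {c : ℂ} {z : V} (hz : T z = c • z) (k : ℕ) :
    (T ^ k) z = c ^ k • z := by
  induction k with
  | zero => simp
  | succ k ih =>
    rw [pow_succ, Module.End.mul_apply, hz, map_smul, ih, smul_smul, pow_succ]
    ring_nf

variable {E H F : Module.End ℂ V}

lemma HEpow (he : H * E = E * H + (2:ℂ) • E) (k : ℕ) :
    H * E ^ k = E ^ k * H + (2 * (k:ℂ)) • E ^ k := by
  induction k with
  | zero => simp
  | succ k ih =>
    have h1 : H * E ^ (k+1) = (H * E ^ k) * E := by rw [pow_succ, ← mul_assoc]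
    rw [h1, ih, add_mul, smul_mul_assoc, mul_assoc, he, pow_succ]
    simp only [mul_add, mul_smul_comm, Nat.cast_add, Nat.cast_one, mul_assoc]
    module

lemma HFpow (hf : H * F = F * H - (2:ℂ) • F) (k : ℕ) :
    H * F ^ k = F ^ k * H - (2 * (k:ℂ)) • F ^ k := by
  induction k with
  | zero => simp
  | succ k ih =>
    have h1 : H * F ^ (k+1) = (H * F ^ k) * F := by rw [pow_succ, ← mul_assoc]
    rw [h1, ih, sub_mul, smul_mul_assoc, mul_assoc, hf, pow_succ]
    simp only [mul_sub, mul_smul_comm, Nat.cast_add, Nat.cast_one, mul_assoc]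
    module

lemma EFpow (hf : H * F = F * H - (2:ℂ) • F) (hef : E * F = F * E + H) (m : ℕ) :
    E * F ^ (m+1) = F ^ (m+1) * E + ((m:ℂ)+1) • (F ^ m * H)
      - (((m:ℂ)+1) * (m:ℂ)) • F ^ m := by
  induction m with
  | zero => simp [hef]
  | succ m ih =>
    have h1 : E * F ^ (m+2) = (E * F ^ (m+1)) * F := by rw [pow_succ, ← mul_assoc]
    rw [h1, ih]
    simp only [add_mul, sub_mul, smul_mul_assoc, mul_assoc, hef, hf, pow_succ,
      mul_add, mul_sub, mul_smul_comm, Nat.cast_add, Nat.cast_one]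
    module

/-- A primitive vector (killed by `E`) of weight `θ` forces `θ` to be a natural number,
and measures the length of its `F`-string. -/
lemma prim [FiniteDimensional ℂ V] (he : H * E = E * H + (2:ℂ) • E)
    (hf : H * F = F * H - (2:ℂ) • F) (hef : E * F = F * E + H)
    {θ : ℂ} {v : V} (hv0 : v ≠ 0) (hE : E v = 0) (hH : H v = θ • v) :
    ∃ m : ℕ, θ = (m:ℂ) ∧ (F ^ (m+1)) v = 0 ∧ ∀ k, k ≤ m → (F ^ k) v ≠ 0 := by
  have heig : ∀ k : ℕ, H ((F ^ k) v) = (θ - 2 * (k:ℂ)) • (F ^ k) v := by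
    intro k
    have h2 := LinearMap.congr_fun (HFpow hf k) v
    simp only [Module.End.mul_apply, LinearMap.sub_apply, LinearMap.smul_apply] at h2
    rw [h2, hH, map_smul, sub_smul]
  have hinj : Function.Injective (fun k : ℕ => θ - 2 * (k:ℂ)) := by
    intro a b hab
    simp only [sub_right_inj, mul_right_inj' (two_ne_zero (α := ℂ))] at hab
    exact_mod_cast hab
  obtain ⟨k₀, hk₀⟩ := exists_eq_zero_of_eigen H (fun k => (F ^ k) v) _ hinj heig
  have hP : ∃ j : ℕ, (F ^ (j+1)) v = 0 := by
    rcases Nat.eq_zero_or_pos k₀ with h0 | h0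
    · exact absurd (by simpa [h0] using hk₀) hv0
    · exact ⟨k₀ - 1, by rwa [Nat.sub_add_cancel h0]⟩
  classical
  set m := Nat.find hP with hm
  have hm1 : (F ^ (m+1)) v = 0 := Nat.find_spec hP
  have hne : ∀ k, k ≤ m → (F ^ k) v ≠ 0 := by
    intro k hk hzero
    rcases k with _ | j
    · exact hv0 hzero
    · have hle : m ≤ j := hm ▸ Nat.find_le hzero
      omega
  have heq := LinearMap.congr_fun (EFpow hf hef m) v
  simp only [Module.End.mul_apply, LinearMap.add_apply, LinearMap.sub_apply,
    LinearMap.smul_apply] at heq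
  rw [hm1, map_zero, hE, map_zero, hH, map_smul] at heq
  have heq2 : (((m:ℂ)+1) * (θ - (m:ℂ))) • (F ^ m) v = 0 := by
    have h := heq.symm
    rw [zero_add] at h
    calc (((m:ℂ)+1) * (θ - (m:ℂ))) • (F ^ m) v
        = ((m:ℂ)+1) • θ • (F ^ m) v - (((m:ℂ)+1)*(m:ℂ)) • (F ^ m) v := by module
      _ = 0 := h
  rcases smul_eq_zero.mp heq2 with hs | hz
  · rcases mul_eq_zero.mp hs with h1 | h2
    · exact absurd h1 (Nat.cast_add_one_ne_zero m)
    · exact ⟨m, by linear_combination h2, hm1, hne⟩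
  · exact absurd hz (hne m le_rfl)

lemma no_prim_neg_one [FiniteDimensional ℂ V] (he : H * E = E * H + (2:ℂ) • E)
    (hf : H * F = F * H - (2:ℂ) • F) (hef : E * F = F * E + H)
    {v : V} (hE : E v = 0) (hH : H v = -v) : v = 0 := by
  by_contra hv0
  obtain ⟨m, hm, -, -⟩ := prim he hf hef hv0 hE (by rw [hH, neg_smul, one_smul])
  have : ((m:ℂ) + 1) = 0 := by linear_combination -hm
  exact Nat.cast_add_one_ne_zero m this

end Stmt12Aux
section Part2
namespace Stmt12Aux

open Polynomial

variable {V : Type*} [AddCommGroup V] [Module ℂ V]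
variable {E H F : Module.End ℂ V}

lemma injAdd (c : ℂ) : Function.Injective (fun k : ℕ => c + 2*(k:ℂ)) := by
  intro a b hab
  simp only at hab
  have : (a:ℂ) = b := by linear_combination hab / 2
  exact_mod_cast this

lemma injSub (c : ℂ) : Function.Injective (fun k : ℕ => c - 2*(k:ℂ)) := by
  intro a b hab
  simp only at hab
  have : (a:ℂ) = b := by linear_combination -hab / 2
  exact_mod_cast this

lemma commOmE (he : H * E = E * H + (2:ℂ) • E) (hef : E * F = F * E + H) :
    Commute ((4:ℂ)•(F*E) + H*H + (2:ℂ)•H) E := by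
  have he' : ∀ X : Module.End ℂ V, H*(E*X) = E*(H*X) + (2:ℂ)•(E*X) := fun X => by
    rw [← mul_assoc, he, add_mul, smul_mul_assoc, mul_assoc]
  have hef' : ∀ X : Module.End ℂ V, E*(F*X) = F*(E*X) + H*X := fun X => by
    rw [← mul_assoc, hef, add_mul, mul_assoc]
  show _ = _
  simp only [add_mul, mul_add, smul_mul_assoc, mul_smul_comm, mul_assoc, he', hef', he, hef,
    smul_add, smul_smul]
  module

lemma commOmH (he : H * E = E * H + (2:ℂ) • E) (hf : H * F = F * H - (2:ℂ) • F) :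
    Commute ((4:ℂ)•(F*E) + H*H + (2:ℂ)•H) H := by
  have he' : ∀ X : Module.End ℂ V, H*(E*X) = E*(H*X) + (2:ℂ)•(E*X) := fun X => by
    rw [← mul_assoc, he, add_mul, smul_mul_assoc, mul_assoc]
  have hf' : ∀ X : Module.End ℂ V, H*(F*X) = F*(H*X) - (2:ℂ)•(F*X) := fun X => by
    rw [← mul_assoc, hf, sub_mul, smul_mul_assoc, mul_assoc]
  show _ = _
  simp only [add_mul, mul_add, smul_mul_assoc, mul_smul_comm, mul_assoc, he', hf', he, hf,
    smul_add, smul_sub, mul_sub, sub_mul, smul_smul]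
  module

lemma commute_aeval {A B : Module.End ℂ V} (h : Commute B A) (ρ : ℂ[X]) :
    Commute B (aeval A ρ) := by
  induction ρ using Polynomial.induction_on' with
  | add p q hp hq => rw [map_add]; exact hp.add_right hq
  | monomial n a =>
    rw [aeval_monomial]
    have h1 : Commute B (algebraMap ℂ (Module.End ℂ V) a) :=
      (Commute.symm (Algebra.commutes a B))
    exact h1.mul_right (h.pow_right n)

lemma aeval_eigenvec {A : Module.End ℂ V} {c : ℂ} {p : V} (hp : A p = c • p) (ρ : ℂ[X]) :
    (aeval A ρ) p = ρ.eval c • p := by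
  induction ρ using Polynomial.induction_on' with
  | add f g hf' hg' =>
    simp only [map_add, LinearMap.add_apply, hf', hg', eval_add, add_smul]
  | monomial n a =>
    rw [aeval_monomial, Module.End.mul_apply, pow_eigen hp n, map_smul,
      Module.algebraMap_end_apply, eval_monomial, smul_smul, mul_comm]

/-- No Jordan block of `H` at eigenvalue `-1`: the key sl₂ fact. -/
lemma jordan_step [FiniteDimensional ℂ V]
    (he : H * E = E * H + (2:ℂ) • E) (hf : H * F = F * H - (2:ℂ) • F)
    (hef : E * F = F * E + H) (v : V)
    (h2 : (H + 1) ((H + 1) v) = 0) : (H + 1) v = 0 := by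
  classical
  set w := (H + 1) v with hwdef
  by_contra hw0
  have hw : H w = -w := by
    have h3 : H w + w = 0 := by
      simpa [LinearMap.add_apply] using h2
    exact eq_neg_of_add_eq_zero_left h3
  have hv : H v = -v + w := by
    rw [hwdef]; simp only [LinearMap.add_apply, Module.End.one_apply]; abel
  -- E-string of w
  have heigw : ∀ k : ℕ, H ((E ^ k) w) = (-1 + 2*(k:ℂ)) • (E ^ k) w := by
    intro k
    have h3 := LinearMap.congr_fun (HEpow he k) w
    simp only [Module.End.mul_apply, LinearMap.add_apply, LinearMap.smul_apply] at h3
    rw [h3, hw, map_neg]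
    module
  obtain ⟨k₀, hk₀⟩ := exists_eq_zero_of_eigen H (fun k => (E ^ k) w) _ (injAdd (-1)) heigw
  have hQ : ∃ j : ℕ, (E ^ (j+1)) w = 0 := by
    rcases Nat.eq_zero_or_pos k₀ with h0 | h0
    · exact absurd (by simpa [h0] using hk₀) hw0
    · exact ⟨k₀ - 1, by rwa [Nat.sub_add_cancel h0]⟩
  set r := Nat.find hQ with hrdef
  have hr1 : (E ^ (r+1)) w = 0 := Nat.find_spec hQ
  set p := (E ^ r) w with hpdef
  have hp0 : p ≠ 0 := by
    intro hz
    rcases Nat.eq_zero_or_pos r with h0 | h0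
    · rw [hpdef, h0] at hz; simp at hz; exact hw0 hz
    · have h4 : (E ^ ((r-1)+1)) w = 0 := by
        rw [Nat.sub_add_cancel h0]; exact hpdef ▸ hz
      have hle : r ≤ r - 1 := hrdef ▸ Nat.find_le h4
      omega
  have hEp : E p = 0 := by
    rw [hpdef, ← Module.End.mul_apply, ← pow_succ']
    exact hr1
  have hrpos : 1 ≤ r := by
    rcases Nat.eq_zero_or_pos r with h0 | h0
    · exfalso
      have hEw : E w = 0 := by
        have h5 := hr1; rw [h0, zero_add, pow_one] at h5; exact h5
      exact hw0 (no_prim_neg_one he hf hef hEw hw)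
    · exact h0
  set θ : ℂ := -1 + 2*(r:ℂ) with hθdef
  have hHp : H p = θ • p := heigw r
  set x₀ := (E ^ r) v with hx₀def
  have hx₀ : H x₀ = θ • x₀ + p := by
    have h3 := LinearMap.congr_fun (HEpow he r) v
    simp only [Module.End.mul_apply, LinearMap.add_apply, LinearMap.smul_apply] at h3
    rw [hx₀def, h3, hv, map_add, map_neg, ← hpdef, ← hx₀def, hθdef]
    module
  -- Casimir operator
  set Om : Module.End ℂ V := (4:ℂ)•(F*E) + H*H + (2:ℂ)•H with hOmdef
  have hcomE : Commute Om E := commOmE he hef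
  have hcomH : Commute Om H := commOmH he hf
  set c₀ : ℂ := θ^2 + 2*θ with hc₀def
  have hΩp : Om p = c₀ • p := by
    rw [hOmdef]
    simp only [LinearMap.add_apply, LinearMap.smul_apply, Module.End.mul_apply]
    rw [hEp, map_zero, hHp, map_smul, hHp, hc₀def]
    simp only [smul_zero]
    module
  have hχ0 : (LinearMap.charpoly Om) ≠ 0 := (LinearMap.charpoly_monic Om).ne_zero
  obtain ⟨ρ, hfac, hnd⟩ :=
    (LinearMap.charpoly Om).exists_eq_pow_rootMultiplicity_mul_and_not_dvd hχ0 c₀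
  set a := (LinearMap.charpoly Om).rootMultiplicity c₀ with hadef
  have hρc : ρ.eval c₀ ≠ 0 := fun hz => hnd (dvd_iff_isRoot.mpr hz)
  set x : V := (ρ.eval c₀)⁻¹ • ((aeval Om ρ) x₀) with hxdef
  set g : Module.End ℂ V := Om - c₀ • 1 with hgdef
  have haevalg : aeval Om (X - C c₀) = g := by
    rw [map_sub, aeval_X, aeval_C, hgdef, Module.algebraMap_end_eq_smul_id]
    rfl
  have hgax : (g ^ a) x = 0 := by
    have key : (g ^ a) * (aeval Om ρ) = 0 := by
      have h1 : aeval Om (LinearMap.charpoly Om) = 0 := LinearMap.aeval_self_charpoly Om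
      rw [hfac, map_mul, map_pow, haevalg] at h1
      exact h1
    have h6 := LinearMap.congr_fun key x₀
    rw [hxdef, map_smul]
    simp only [Module.End.mul_apply, LinearMap.zero_apply] at h6
    rw [h6, smul_zero]
  have hHx : H x = θ • x + p := by
    have h1 : H ((aeval Om ρ) x₀) = (aeval Om ρ) (H x₀) := by
      have h7 := LinearMap.congr_fun (commute_aeval hcomH.symm ρ) x₀
      simpa [Module.End.mul_apply] using h7
    rw [hxdef, map_smul, h1, hx₀, map_add, map_smul, aeval_eigenvec hΩp ρ]
    rw [smul_add, smul_smul, smul_smul, inv_mul_cancel₀ hρc, one_smul,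
      mul_comm ((ρ.eval c₀)⁻¹) θ, ← smul_smul]
  have hx0 : x ≠ 0 := by
    intro hz
    rw [hz] at hHx
    simp only [map_zero, smul_zero, zero_add] at hHx
    exact hp0 hHx.symm
  -- E kills x
  have hEx : E x = 0 := by
    by_contra hu0
    set u := E x with hudef
    have hHu : H u = (θ + 2) • u := by
      have h3 := LinearMap.congr_fun he x
      simp only [Module.End.mul_apply, LinearMap.add_apply, LinearMap.smul_apply] at h3
      rw [hudef, h3, hHx, map_add, map_smul, hEp]
      module
    have heigu : ∀ k : ℕ, H ((E ^ k) u) = ((θ + 2) + 2*(k:ℂ)) • (E ^ k) u := by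
      intro k
      have h3 := LinearMap.congr_fun (HEpow he k) u
      simp only [Module.End.mul_apply, LinearMap.add_apply, LinearMap.smul_apply] at h3
      rw [h3, hHu, map_smul]
      module
    obtain ⟨k₁, hk₁⟩ := exists_eq_zero_of_eigen H (fun k => (E ^ k) u) _ (injAdd (θ+2)) heigu
    have hQ2 : ∃ j : ℕ, (E ^ (j+1)) u = 0 := by
      rcases Nat.eq_zero_or_pos k₁ with h0 | h0
      · exact absurd (by simpa [h0] using hk₁) hu0
      · exact ⟨k₁ - 1, by rwa [Nat.sub_add_cancel h0]⟩
    set t := Nat.find hQ2 with htdef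
    have ht1 : (E ^ (t+1)) u = 0 := Nat.find_spec hQ2
    set q := (E ^ t) u with hqdef
    have hq0 : q ≠ 0 := by
      intro hz
      rcases Nat.eq_zero_or_pos t with h0 | h0
      · rw [hqdef, h0] at hz; simp at hz; exact hu0 hz
      · have h4 : (E ^ ((t-1)+1)) u = 0 := by
          rw [Nat.sub_add_cancel h0]; exact hqdef ▸ hz
        have hle : t ≤ t - 1 := htdef ▸ Nat.find_le h4
        omega
    have hEq : E q = 0 := by
      rw [hqdef, ← Module.End.mul_apply, ← pow_succ']
      exact ht1
    set μ : ℂ := (θ + 2) + 2*(t:ℂ) with hμdef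
    have hHq : H q = μ • q := heigu t
    have hΩq : Om q = (μ^2 + 2*μ) • q := by
      rw [hOmdef]
      simp only [LinearMap.add_apply, LinearMap.smul_apply, Module.End.mul_apply]
      rw [hEq, map_zero, hHq, map_smul, hHq]
      simp only [smul_zero]
      module
    have hgaq : (g ^ a) q = 0 := by
      have hq2 : q = (E ^ (t+1)) x := by
        rw [hqdef, hudef, ← Module.End.mul_apply, ← pow_succ]
      have hcg : Commute g E := hcomE.sub_left ((Commute.one_left E).smul_left c₀)
      have hcg2 : (g ^ a) * (E ^ (t+1)) = (E ^ (t+1)) * (g ^ a) :=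
        (hcg.pow_pow a (t+1))
      have h8 := LinearMap.congr_fun hcg2 x
      simp only [Module.End.mul_apply] at h8
      rw [hq2, h8, hgax, map_zero]
    have hgq : g q = (μ^2 + 2*μ - c₀) • q := by
      rw [hgdef]
      simp only [LinearMap.sub_apply, LinearMap.smul_apply, Module.End.one_apply]
      rw [hΩq, sub_smul]
    have hsq : (μ^2 + 2*μ - c₀)^a • q = 0 := by
      rw [← pow_eigen hgq a]; exact hgaq
    have hs0 : μ^2 + 2*μ - c₀ = 0 := by
      rcases smul_eq_zero.mp hsq with hs | hq'
      · rcases Nat.eq_zero_or_pos a with ha | ha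
        · rw [ha, pow_zero] at hs; exact absurd hs one_ne_zero
        · exact pow_eq_zero_iff (by omega) |>.mp hs
      · exact absurd hq' hq0
    have hfactor : (μ - θ) * (μ + θ + 2) = 0 := by
      linear_combination hs0 + hc₀def
    rcases mul_eq_zero.mp hfactor with hcase | hcase
    · have h9 : ((2 + 2*t : ℕ):ℂ) = 0 := by
        push_cast
        linear_combination hcase + hμdef
      have : (2 + 2*t : ℕ) = 0 := by exact_mod_cast h9
      omega
    · have h9 : ((4*r + 2 + 2*t : ℕ):ℂ) = 0 := by
        push_cast
        linear_combination hcase + hμdef + 2*hθdef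
      have : (4*r + 2 + 2*t : ℕ) = 0 := by exact_mod_cast h9
      omega
  -- F-string of x against the primitive p
  obtain ⟨θn, hθn, hFp1, hFpne⟩ := prim he hf hef hp0 hEp hHp
  have chainx : ∀ k : ℕ, H ((F ^ k) x) = (θ - 2*(k:ℂ)) • (F ^ k) x + (F ^ k) p := by
    intro k
    have h3 := LinearMap.congr_fun (HFpow hf k) x
    simp only [Module.End.mul_apply, LinearMap.sub_apply, LinearMap.smul_apply] at h3
    rw [h3, hHx, map_add, map_smul]
    module
  have chainp : ∀ k : ℕ, H ((F ^ k) p) = (θ - 2*(k:ℂ)) • (F ^ k) p := by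
    intro k
    have h3 := LinearMap.congr_fun (HFpow hf k) p
    simp only [Module.End.mul_apply, LinearMap.sub_apply, LinearMap.smul_apply] at h3
    rw [h3, hHp, map_smul]
    module
  have hfamzero : ∃ j : ℕ, (F ^ (j+1)) x = 0 := by
    have hfam : ∀ k : ℕ, H ((F ^ (k + (θn+1))) x)
        = ((θ - 2*((θn:ℂ)+1)) - 2*(k:ℂ)) • (F ^ (k + (θn+1))) x := by
      intro k
      have hzero : (F ^ (k + (θn+1))) p = 0 := by
        rw [pow_add, Module.End.mul_apply, hFp1, map_zero]
      have h3 := chainx (k + (θn+1))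
      rw [hzero, add_zero] at h3
      rw [h3]
      congr 1
      push_cast
      ring
    obtain ⟨k₂, hk₂⟩ := exists_eq_zero_of_eigen H (fun k => (F ^ (k + (θn+1))) x) _
      (injSub _) hfam
    exact ⟨k₂ + θn, by rw [show k₂ + θn + 1 = k₂ + (θn+1) by omega]; exact hk₂⟩
  set m := Nat.find hfamzero with hmdef
  have hm1 : (F ^ (m+1)) x = 0 := Nat.find_spec hfamzero
  have hmne : ∀ k, k ≤ m → (F ^ k) x ≠ 0 := by
    intro k hk hzero
    rcases k with _ | j
    · exact hx0 hzero
    · have hle : m ≤ j := hmdef ▸ Nat.find_le hzero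
      omega
  have heqA : (θ - (m:ℂ)) • (F ^ m) x + (F ^ m) p = 0 := by
    have heq := LinearMap.congr_fun (EFpow hf hef m) x
    simp only [Module.End.mul_apply, LinearMap.add_apply, LinearMap.sub_apply,
      LinearMap.smul_apply] at heq
    rw [hm1, map_zero, hEx, map_zero, hHx, map_add, map_smul] at heq
    have h3 : ((m:ℂ)+1) • ((θ - (m:ℂ)) • (F ^ m) x + (F ^ m) p) = 0 := by
      calc ((m:ℂ)+1) • ((θ - (m:ℂ)) • (F ^ m) x + (F ^ m) p)
          = 0 + ((m:ℂ)+1) • (θ • (F ^ m) x + (F ^ m) p)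
            - (((m:ℂ)+1) * (m:ℂ)) • (F ^ m) x := by module
        _ = 0 := heq.symm
    rcases smul_eq_zero.mp h3 with h | h
    · exact absurd h (Nat.cast_add_one_ne_zero m)
    · exact h
  have heqB : (θ - (m:ℂ)) • (F ^ m) p = 0 := by
    have h4 : (θ-(m:ℂ)) • H ((F ^ m) x) + H ((F ^ m) p) = 0 := by
      rw [← map_smul, ← map_add, heqA, map_zero]
    rw [chainx m, chainp m] at h4
    have h5 : (θ-2*(m:ℂ)) • ((θ-(m:ℂ)) • (F ^ m) x + (F ^ m) p) = 0 := by
      rw [heqA, smul_zero]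
    calc (θ-(m:ℂ)) • (F ^ m) p
        = ((θ-(m:ℂ)) • ((θ-2*(m:ℂ)) • (F ^ m) x + (F ^ m) p) + (θ-2*(m:ℂ)) • (F ^ m) p)
          - (θ-2*(m:ℂ)) • ((θ-(m:ℂ)) • (F ^ m) x + (F ^ m) p) := by module
      _ = 0 := by rw [h4, h5, sub_zero]
  by_cases hmθ : (m:ℂ) = θ
  · have hmθn : m = θn := by
      have hcast : ((m:ℕ):ℂ) = ((θn:ℕ):ℂ) := by rw [hmθ, hθn]
      exact_mod_cast hcast
    have hFmp : (F ^ m) p = 0 := by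
      rw [← hmθ, sub_self, zero_smul, zero_add] at heqA
      exact heqA
    exact (hFpne θn le_rfl) (hmθn ▸ hFmp)
  · have hFmp : (F ^ m) p = 0 := by
      rcases smul_eq_zero.mp heqB with hcase | hcase
      · exact absurd (show (m:ℂ) = θ by linear_combination -hcase) hmθ
      · exact hcase
    have hFmx : (F ^ m) x = 0 := by
      rw [hFmp, add_zero] at heqA
      rcases smul_eq_zero.mp heqA with hcase | hcase
      · exact absurd (show (m:ℂ) = θ by linear_combination -hcase) hmθ
      · exact hcase
    exact hmne m le_rfl hFmx

lemma ker_pow_H_add_one [FiniteDimensional ℂ V]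
    (he : H * E = E * H + (2:ℂ) • E) (hf : H * F = F * H - (2:ℂ) • F)
    (hef : E * F = F * E + H) :
    ∀ (k : ℕ) (v : V), ((H + 1) ^ k) v = 0 → (H + 1) v = 0 := by
  intro k
  induction k with
  | zero =>
    intro v hv
    simp only [pow_zero, Module.End.one_apply] at hv
    simp [hv]
  | succ k ih =>
    intro v hv
    have h1 : ((H+1)^k) ((H+1) v) = 0 := by
      rw [← Module.End.mul_apply, ← pow_succ]
      exact hv
    exact jordan_step he hf hef v (ih _ h1)

end Stmt12Aux
end Part2
section Main

open Stmt12Aux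

/-- For an `sl₂`-triple `(e, h, f)` of `n × n` complex matrices, the form
`σ(B, B') = trace ((e*B + B*e) * B')` is (a) symmetric, and (b) non-degenerate on
the `(-1)`-eigenspace `W = {B | h*B - B*h = -B}` of `ad h`. This encodes that `ω_χ`
restricts to a non-degenerate symmetric form on the odd part of `g(-1)`. -/
theorem stmt12 (n : ℕ) (e h f : Matrix (Fin n) (Fin n) ℂ)
    (h1 : h * e - e * h = 2 • e) (h2 : h * f - f * h = -(2 • f))
    (h3 : e * f - f * e = h) :
    (∀ B B' : Matrix (Fin n) (Fin n) ℂ,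
      Matrix.trace ((e * B + B * e) * B') = Matrix.trace ((e * B' + B' * e) * B)) ∧
    (∀ B ∈ {B : Matrix (Fin n) (Fin n) ℂ | h * B - B * h = -B},
      (∀ B' ∈ {B : Matrix (Fin n) (Fin n) ℂ | h * B - B * h = -B},
        Matrix.trace ((e * B + B * e) * B') = 0) → B = 0) := by
  classical
  have t1 : ∀ X Y : Matrix (Fin n) (Fin n) ℂ,
      Matrix.trace (X * (e * Y)) = Matrix.trace (e * (Y * X)) := by
    intro X Y
    rw [Matrix.trace_mul_comm, mul_assoc]
  constructor
  · intro B B'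
    calc Matrix.trace ((e * B + B * e) * B')
        = Matrix.trace (e * (B * B')) + Matrix.trace (B * (e * B')) := by
          rw [add_mul, Matrix.trace_add, mul_assoc, mul_assoc]
      _ = Matrix.trace (e * (B' * B)) + Matrix.trace (B' * (e * B)) := by
          rw [t1 B B', t1 B' B, add_comm]
      _ = Matrix.trace ((e * B' + B' * e) * B) := by
          rw [add_mul, Matrix.trace_add, mul_assoc, mul_assoc]
  · intro B hB hyp
    have hB' : h * B - B * h = -B := hB
    -- matrix-level normalized relations
    have hsmul : ∀ X : Matrix (Fin n) (Fin n) ℂ, (2:ℕ) • X = (2:ℂ) • X := fun X => by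
      rw [← Nat.cast_smul_eq_nsmul ℂ 2 X]
      norm_num
    have hhe : h * e = e * h + (2:ℂ) • e := by
      rw [sub_eq_iff_eq_add.mp h1, hsmul e]
      abel
    have hhf : h * f = f * h - (2:ℂ) • f := by
      rw [sub_eq_iff_eq_add.mp h2, hsmul f]
      abel
    have hhef : e * f = f * e + h := by
      rw [sub_eq_iff_eq_add.mp h3]
      abel
    have hhe' : ∀ X : Matrix (Fin n) (Fin n) ℂ,
        h * (e * X) = e * (h * X) + (2:ℂ) • (e * X) := fun X => by
      rw [← mul_assoc, hhe, add_mul, smul_mul_assoc, mul_assoc]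
    have hhf' : ∀ X : Matrix (Fin n) (Fin n) ℂ,
        h * (f * X) = f * (h * X) - (2:ℂ) • (f * X) := fun X => by
      rw [← mul_assoc, hhf, sub_mul, smul_mul_assoc, mul_assoc]
    have hhef' : ∀ X : Matrix (Fin n) (Fin n) ℂ,
        e * (f * X) = f * (e * X) + h * X := fun X => by
      rw [← mul_assoc, hhef, add_mul, mul_assoc]
    -- the operators
    set adH : Module.End ℂ (Matrix (Fin n) (Fin n) ℂ) :=
      LinearMap.mulLeft ℂ h - LinearMap.mulRight ℂ h with hadH
    set Eh : Module.End ℂ (Matrix (Fin n) (Fin n) ℂ) :=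
      LinearMap.mulLeft ℂ e + LinearMap.mulRight ℂ e with hEh
    set Fh : Module.End ℂ (Matrix (Fin n) (Fin n) ℂ) :=
      LinearMap.mulLeft ℂ f + LinearMap.mulRight ℂ f with hFh
    have hadHapp : ∀ X, adH X = h * X - X * h := fun X => by
      rw [hadH]; simp [LinearMap.sub_apply, LinearMap.mulLeft_apply, LinearMap.mulRight_apply]
    have hEhapp : ∀ X, Eh X = e * X + X * e := fun X => by
      rw [hEh]; simp [LinearMap.add_apply, LinearMap.mulLeft_apply, LinearMap.mulRight_apply]
    have hFhapp : ∀ X, Fh X = f * X + X * f := fun X => by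
      rw [hFh]; simp [LinearMap.add_apply, LinearMap.mulLeft_apply, LinearMap.mulRight_apply]
    -- the sl2 relations for (Eh, adH, Fh)
    have heq : adH * Eh = Eh * adH + (2:ℂ) • Eh := by
      apply LinearMap.ext
      intro X
      simp only [Module.End.mul_apply, LinearMap.add_apply, LinearMap.smul_apply,
        hadHapp, hEhapp]
      simp only [mul_add, add_mul, mul_sub, sub_mul, smul_add, mul_smul_comm, smul_mul_assoc, mul_assoc, hhe', hhe]
      module
    have hfq : adH * Fh = Fh * adH - (2:ℂ) • Fh := by
      apply LinearMap.ext
      intro X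
      simp only [Module.End.mul_apply, LinearMap.sub_apply, LinearMap.smul_apply,
        hadHapp, hFhapp]
      simp only [mul_add, add_mul, mul_sub, sub_mul, smul_add, smul_sub, mul_smul_comm, smul_mul_assoc, mul_assoc, hhf', hhf]
      module
    have hefq : Eh * Fh = Fh * Eh + adH := by
      apply LinearMap.ext
      intro X
      simp only [Module.End.mul_apply, LinearMap.add_apply, hadHapp, hEhapp, hFhapp]
      simp only [mul_add, add_mul, mul_sub, sub_mul, mul_smul_comm, smul_mul_assoc, mul_assoc, hhef', hhef]
      module
    have hBeig : adH B = -B := by rw [hadHapp, hB']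
    -- Y and its eigenproperty
    set Y : Matrix (Fin n) (Fin n) ℂ := e * B + B * e with hYdef
    have hEhB : Eh B = Y := hEhapp B
    have hYeig : adH Y = Y := by
      have h4 := LinearMap.congr_fun heq B
      simp only [Module.End.mul_apply, LinearMap.add_apply, LinearMap.smul_apply] at h4
      rw [hEhB, hBeig, map_neg, hEhB] at h4
      rw [h4]
      module
    have hY : h * Y - Y * h = Y := by rw [← hadHapp, hYeig]
    have hY' : Y * h = h * Y - Y := by
      rw [sub_eq_iff_eq_add.mp hY]; abel
    -- the trace functional
    set φ : Matrix (Fin n) (Fin n) ℂ →ₗ[ℂ] ℂ :=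
      (Matrix.traceLinearMap (Fin n) ℂ ℂ).comp (LinearMap.mulLeft ℂ Y) with hφ
    have hφdef : ∀ Z, φ Z = Matrix.trace (Y * Z) := fun Z => rfl
    have hφinv : ∀ Z : Matrix (Fin n) (Fin n) ℂ, φ ((adH + 1) Z) = 0 := by
      intro Z
      rw [hφdef, LinearMap.add_apply, Module.End.one_apply, hadHapp]
      have e1 : Y * (h * Z) = (h * Y) * Z - Y * Z := by
        rw [← mul_assoc, hY', sub_mul]
      have e2 : Matrix.trace (Y * (Z * h)) = Matrix.trace ((h * Y) * Z) := by
        rw [← mul_assoc, Matrix.trace_mul_comm, mul_assoc]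
      rw [mul_add, mul_sub, Matrix.trace_add, Matrix.trace_sub, e1, Matrix.trace_sub, e2]
      ring
    -- every generalized eigenspace is in the kernel of φ
    have key : ∀ μ : ℂ, Module.End.maxGenEigenspace adH μ ≤ LinearMap.ker φ := by
      intro μ Z hZ
      have hZS : Z ∈ Module.End.maxGenEigenspace adH μ := hZ
      rw [Module.End.mem_maxGenEigenspace] at hZ
      obtain ⟨k, hk⟩ := hZ
      by_cases hμ : μ = -1
      · subst hμ
        have hops : adH - (-1:ℂ) • (1 : Module.End ℂ (Matrix (Fin n) (Fin n) ℂ)) = adH + 1 := by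
          ext z
          simp
        rw [hops] at hk
        have hZ1 : (adH + 1) Z = 0 := ker_pow_H_add_one heq hfq hefq k Z hk
        have hZ2 : adH Z = -Z := by
          have h5 : adH Z + Z = 0 := by
            simpa [LinearMap.add_apply, Module.End.one_apply] using hZ1
          exact eq_neg_of_add_eq_zero_left h5
        have hZW : h * Z - Z * h = -Z := by rw [← hadHapp, hZ2]
        have h6 := hyp Z hZW
        rw [LinearMap.mem_ker, hφdef, hYdef]
        exact h6
      · have hcomm : Commute adH (adH + (1 : Module.End ℂ (Matrix (Fin n) (Fin n) ℂ))) :=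
          (Commute.refl adH).add_right (Commute.one_right adH)
        have hmaps : ∀ x ∈ Module.End.maxGenEigenspace adH μ,
            (adH + 1) x ∈ Module.End.maxGenEigenspace adH μ :=
          fun x hx => Module.End.mapsTo_maxGenEigenspace_of_comm hcomm μ hx
        have hinj : Function.Injective ((adH + 1).restrict hmaps) := by
          intro z1 z2 hz
          have h7 : (adH + 1) (z1 : Matrix (Fin n) (Fin n) ℂ) - (adH + 1) (z2 : _) = 0 := by
            have := congrArg Subtype.val hz
            simp only [LinearMap.restrict_apply] at this
            rw [this]; abel
        -- z := z1 - z2 is in the eigenspace and killed by adH + 1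
          have hz12 : (z1 : Matrix (Fin n) (Fin n) ℂ) - z2 ∈ Module.End.maxGenEigenspace adH μ :=
            Submodule.sub_mem _ z1.2 z2.2
          have h8 : (adH + 1) ((z1 : Matrix (Fin n) (Fin n) ℂ) - z2) = 0 := by
            rw [map_sub]; exact h7
          have h9 : adH ((z1 : Matrix (Fin n) (Fin n) ℂ) - z2)
              = -((z1 : Matrix (Fin n) (Fin n) ℂ) - z2) := by
            have h10 : adH ((z1 : Matrix (Fin n) (Fin n) ℂ) - z2)
                + ((z1 : Matrix (Fin n) (Fin n) ℂ) - z2) = 0 := by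
              simpa [LinearMap.add_apply, Module.End.one_apply] using h8
            exact eq_neg_of_add_eq_zero_left h10
          have h11 : (adH - μ • 1) ((z1 : Matrix (Fin n) (Fin n) ℂ) - z2)
              = (-1 - μ) • ((z1 : Matrix (Fin n) (Fin n) ℂ) - z2) := by
            simp only [LinearMap.sub_apply, LinearMap.smul_apply, Module.End.one_apply, h9]
            module
          rw [Module.End.mem_maxGenEigenspace] at hz12
          obtain ⟨k', hk'⟩ := hz12
          have h12 := pow_eigen h11 k'
          rw [hk'] at h12
          have h13 : ((-1 - μ)^k') • ((z1 : Matrix (Fin n) (Fin n) ℂ) - z2) = 0 := h12.symm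
          have h14 : (z1 : Matrix (Fin n) (Fin n) ℂ) - z2 = 0 := by
            rcases smul_eq_zero.mp h13 with hs | hz0
            · exfalso
              have : (-1 - μ) ≠ 0 := fun hc => hμ (by linear_combination -hc)
              exact this (pow_eq_zero_iff'.mp hs).1
            · exact hz0
          exact Subtype.ext (sub_eq_zero.mp h14)
        have hsurj : Function.Surjective ((adH + 1).restrict hmaps) :=
          LinearMap.injective_iff_surjective.mp hinj
        obtain ⟨z', hz'⟩ := hsurj ⟨Z, hZS⟩
        have h15 : (adH + 1) (z' : Matrix (Fin n) (Fin n) ℂ) = Z := by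
          have := congrArg Subtype.val hz'
          simpa [LinearMap.restrict_apply] using this
        rw [LinearMap.mem_ker, ← h15]
        exact hφinv z'
    have htop : (⊤ : Submodule ℂ (Matrix (Fin n) (Fin n) ℂ)) ≤ LinearMap.ker φ := by
      rw [← Module.End.iSup_maxGenEigenspace_eq_top adH]
      exact iSup_le key
    have hφ0 : ∀ Z : Matrix (Fin n) (Fin n) ℂ, Matrix.trace (Y * Z) = 0 := fun Z =>
      LinearMap.mem_ker.mp (htop Submodule.mem_top)
    have hY0 : Y = 0 := by
      ext i j
      have h16 := hφ0 (Matrix.single j i 1)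
      simp only [Matrix.trace, Matrix.diag, Matrix.mul_apply, Matrix.single,
        Matrix.of_apply, mul_ite, mul_one, mul_zero, ite_and, Finset.sum_ite_eq,
        Finset.mem_univ, if_true] at h16
      simpa using h16
    have hEB : Eh B = 0 := by rw [hEhB, hY0]
    exact no_prim_neg_one heq hfq hefq hEB hBeig

end Main
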